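/- Negative result for supremum-based convex losses: Suppose the zero function belongs to H and H is regular for adversarial calibration, i.e., there exist x₀∈X and f,g∈H with inf_{x':‖x₀−x'‖_p≤γ} f(x') > 0 and sup_{x':‖x₀−x'‖_p≤γ} g(x') < 0. Let Φ:ℝ→[0,∞) be convex and non-increasing, and let Φ̃ be its supremum-based loss. If f:[0,∞)→[0,∞) is non-decreasing and satisfies, for every distribution D over X×Y and every h∈H, R_{ℓ_γ}(h) − R*_{ℓ_γ,H} ≤ f(R_{Φ̃}(h) − R*_{Φ̃,H}), then f(t) ≥ 1/2 for every t ≥ 0. -/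
import Mathlib


open MeasureTheory Set
open scoped ENNReal

noncomputable section

/-- Conditional `ℓ`-risk of `h` at `x` with conditional probability level `t`. -/
def condRiskT {X : Type*} (ℓ : (X → ℝ) → X → ℝ → ℝ) (h : X → ℝ) (x : X) (t : ℝ) : ℝ :=
  t * ℓ h x 1 + (1 - t) * ℓ h x (-1)

/-- Conditional `ℓ`-risk of `h` at `x`. -/
def condRisk {X : Type*} (ℓ : (X → ℝ) → X → ℝ → ℝ) (η : X → ℝ) (h : X → ℝ) (x : X) : ℝ :=
  condRiskT ℓ h x (η x)

/-- Minimal conditional `ℓ`-risk over the hypothesis set `H` at `x`. -/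
def condRiskStar {X : Type*} (ℓ : (X → ℝ) → X → ℝ → ℝ) (η : X → ℝ) (H : Set (X → ℝ))
    (x : X) : ℝ :=
  sInf ((fun h => condRisk ℓ η h x) '' H)

/-- `ΔC_{ℓ,H}(h,x)`. -/
def deltaC {X : Type*} (ℓ : (X → ℝ) → X → ℝ → ℝ) (η : X → ℝ) (H : Set (X → ℝ))
    (h : X → ℝ) (x : X) : ℝ :=
  condRisk ℓ η h x - condRiskStar ℓ η H x

/-- `ΔC_{ℓ,H}(h,x,t)`. -/
def deltaCT {X : Type*} (ℓ : (X → ℝ) → X → ℝ → ℝ) (H : Set (X → ℝ))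
    (h : X → ℝ) (x : X) (t : ℝ) : ℝ :=
  condRiskT ℓ h x t - sInf ((fun h' => condRiskT ℓ h' x t) '' H)

/-- Generalization error `R_ℓ(h)` with respect to the input-space set `XS`. -/
def genErrS {X : Type*} [MeasurableSpace X] (μ : Measure X) (XS : Set X)
    (ℓ : (X → ℝ) → X → ℝ → ℝ) (η : X → ℝ) (h : X → ℝ) : ℝ :=
  ∫ x in XS, condRisk ℓ η h x ∂μ

/-- Best-in-class error `R*_{ℓ,H}`. -/
def bestErrS {X : Type*} [MeasurableSpace X] (μ : Measure X) (XS : Set X)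
    (ℓ : (X → ℝ) → X → ℝ → ℝ) (η : X → ℝ) (H : Set (X → ℝ)) : ℝ :=
  sInf ((fun h => genErrS μ XS ℓ η h) '' H)

/-- Minimizability gap `M_{ℓ,H}`. -/
def minGapS {X : Type*} [MeasurableSpace X] (μ : Measure X) (XS : Set X)
    (ℓ : (X → ℝ) → X → ℝ → ℝ) (η : X → ℝ) (H : Set (X → ℝ)) : ℝ :=
  bestErrS μ XS ℓ η H - ∫ x in XS, condRiskStar ℓ η H x ∂μ

/-- `ε`-truncation `⟨t⟩_ε = t · 1_{t > ε}`. -/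
def trunc (ε t : ℝ) : ℝ := if ε < t then t else 0

/-- `u_h(x) = inf_{‖x−x'‖ ≤ γ} h(x')`. -/
def uInf {E : Type*} [NormedAddCommGroup E] (γ : ℝ) (h : E → ℝ) (x : E) : ℝ :=
  sInf (h '' {x' | ‖x - x'‖ ≤ γ})

/-- `o_h(x) = sup_{‖x−x'‖ ≤ γ} h(x')`. -/
def oSup {E : Type*} [NormedAddCommGroup E] (γ : ℝ) (h : E → ℝ) (x : E) : ℝ :=
  sSup (h '' {x' | ‖x - x'‖ ≤ γ})

/-- The adversarial zero-one loss `ℓ_γ(h,x,y) = sup_{‖x−x'‖ ≤ γ} 1_{y·h(x') ≤ 0}`. -/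
def lossGamma {E : Type*} [NormedAddCommGroup E] (γ : ℝ) (h : E → ℝ) (x : E) (y : ℝ) : ℝ :=
  sSup ((fun x' => if y * h x' ≤ 0 then (1:ℝ) else 0) '' {x' | ‖x - x'‖ ≤ γ})

/-- The supremum-based loss `Φ̃(h,x,y) = sup_{‖x−x'‖ ≤ γ} Φ(y·h(x'))`. -/
def supLoss {E : Type*} [NormedAddCommGroup E] (γ : ℝ) (Φ : ℝ → ℝ)
    (h : E → ℝ) (x : E) (y : ℝ) : ℝ :=
  sSup ((fun x' => Φ (y * h x')) '' {x' | ‖x - x'‖ ≤ γ})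

/-- `H̄_γ(x) = {h ∈ H : u_h(x) ≤ 0 ≤ o_h(x)}`. -/
def Hbar {E : Type*} [NormedAddCommGroup E] (γ : ℝ) (H : Set (E → ℝ)) (x : E) :
    Set (E → ℝ) :=
  {h ∈ H | uInf γ h x ≤ 0 ∧ 0 ≤ oSup γ h x}

/-- A hypothesis set is symmetric when it is closed under negation. -/
def IsSymmetricHyp {E : Type*} (H : Set (E → ℝ)) : Prop :=
  ∀ h : E → ℝ, h ∈ H ↔ (fun x => -(h x)) ∈ H

end


section AuxNegSup

open Set

variable {E : Type*} [NormedAddCommGroup E] {γ : ℝ}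

private lemma lossGamma_le_one' (h : E → ℝ) (x : E) (y : ℝ) : lossGamma γ h x y ≤ 1 := by
  refine Real.sSup_le ?_ zero_le_one
  rintro v ⟨x', _, rfl⟩
  dsimp only
  split <;> norm_num

private lemma lossGamma_nonneg' (h : E → ℝ) (x : E) (y : ℝ) : 0 ≤ lossGamma γ h x y := by
  refine Real.sSup_nonneg ?_
  rintro v ⟨x', _, rfl⟩
  dsimp only
  split <;> norm_num

private lemma lossGamma_eq_one' {h : E → ℝ} {x x' : E} {y : ℝ}
    (hx' : ‖x - x'‖ ≤ γ) (hle : y * h x' ≤ 0) : lossGamma γ h x y = 1 := by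
  refine le_antisymm (lossGamma_le_one' h x y) ?_
  refine le_csSup ⟨1, ?_⟩ ⟨x', hx', by simp [hle]⟩
  rintro v ⟨x'', _, rfl⟩
  dsimp only
  split <;> norm_num

private lemma lossGamma_eq_zero' {h : E → ℝ} {x : E} {y : ℝ}
    (hpos : ∀ x', ‖x - x'‖ ≤ γ → 0 < y * h x') : lossGamma γ h x y = 0 := by
  refine le_antisymm ?_ (lossGamma_nonneg' h x y)
  refine Real.sSup_le ?_ le_rfl
  rintro v ⟨x', hx', rfl⟩
  dsimp only
  rw [if_neg (not_le.mpr (hpos x' hx'))]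

private lemma lossGamma_sum_ge_one' (h : E → ℝ) (x : E) (hγ0 : 0 ≤ γ) :
    1 ≤ lossGamma γ h x 1 + lossGamma γ h x (-1) := by
  by_cases hc : ∃ x', ‖x - x'‖ ≤ γ ∧ h x' ≤ 0
  · obtain ⟨x', hx', hle⟩ := hc
    have h1 : lossGamma γ h x 1 = 1 := lossGamma_eq_one' hx' (by rw [one_mul]; exact hle)
    have h2 := lossGamma_nonneg' (γ := γ) h x (-1)
    linarith
  · push_neg at hc
    have hx : ‖x - x‖ ≤ γ := by simp [hγ0]
    have hpos : 0 < h x := hc x hx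
    have h2 : lossGamma γ h x (-1) = 1 :=
      lossGamma_eq_one' hx (by rw [neg_one_mul]; linarith)
    have h1 := lossGamma_nonneg' (γ := γ) h x 1
    linarith

private lemma supLoss_nonneg' (Φ : ℝ → ℝ) (hΦ : ∀ t, 0 ≤ Φ t) (h : E → ℝ) (x : E) (y : ℝ) :
    0 ≤ supLoss γ Φ h x y :=
  Real.sSup_nonneg (by rintro v ⟨x', _, rfl⟩; exact hΦ _)

private lemma supLoss_zero_fun' (Φ : ℝ → ℝ) (x : E) (y : ℝ) (hγ0 : 0 ≤ γ) :
    supLoss γ Φ (fun _ => (0:ℝ)) x y = Φ 0 := by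
  unfold supLoss
  have hne : ({x' : E | ‖x - x'‖ ≤ γ}).Nonempty := ⟨x, by simp [hγ0]⟩
  have himg : (fun x' => Φ (y * (fun _ : E => (0:ℝ)) x')) '' {x' : E | ‖x - x'‖ ≤ γ}
      = {Φ 0} := by
    simp only [mul_zero]
    exact hne.image_const _
  rw [himg, csSup_singleton]

private lemma conv_two_mul (Φ : ℝ → ℝ) (hΦconv : ConvexOn ℝ univ Φ) (u : ℝ) :
    2 * Φ 0 ≤ Φ u + Φ (-u) := by
  have h := hΦconv.2 (mem_univ u) (mem_univ (-u))
    (by norm_num : (0:ℝ) ≤ 1/2) (by norm_num : (0:ℝ) ≤ 1/2) (by norm_num)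
  have hpt : (1/2 : ℝ) • u + (1/2 : ℝ) • (-u) = 0 := by
    rw [smul_eq_mul, smul_eq_mul]; ring
  rw [hpt] at h
  simp only [smul_eq_mul] at h
  linarith

end AuxNegSup

open MeasureTheory Set in
/-- **Negative result for supremum-based convex losses** (Theorem 5, convex case). -/
theorem negative_result_sup_convex
    {d : ℕ} {p : ℝ≥0∞} [Fact (1 ≤ p)]
    [MeasurableSpace (PiLp p (fun _ : Fin d => ℝ))]
    [BorelSpace (PiLp p (fun _ : Fin d => ℝ))]
    (γ : ℝ) (hγ : 0 < γ)
    (XS : Set (PiLp p (fun _ : Fin d => ℝ))) (hXSne : XS.Nonempty)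
    (hXSmeas : MeasurableSet XS)
    (H : Set (PiLp p (fun _ : Fin d => ℝ) → ℝ)) (hHne : H.Nonempty)
    (hHmeas : ∀ h ∈ H, Measurable h)
    (hzero : (fun _ => (0:ℝ)) ∈ H)
    (hregular : ∃ x₀ ∈ XS, ∃ f₀ ∈ H, ∃ g₀ ∈ H, 0 < uInf γ f₀ x₀ ∧ oSup γ g₀ x₀ < 0)
    (Φ : ℝ → ℝ) (hΦpos : ∀ t, 0 ≤ Φ t)
    (hΦconv : ConvexOn ℝ univ Φ) (hΦanti : Antitone Φ)
    (f : ℝ → ℝ) (hfpos : ∀ t, 0 ≤ t → 0 ≤ f t) (hfmono : MonotoneOn f (Ici (0:ℝ)))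
    (hbound : ∀ μ : Measure (PiLp p (fun _ : Fin d => ℝ)), IsProbabilityMeasure μ →
      μ XS = 1 →
      ∀ η : PiLp p (fun _ : Fin d => ℝ) → ℝ, Measurable η → (∀ x, η x ∈ Icc (0:ℝ) 1) →
      ∀ h ∈ H,
        genErrS μ XS (lossGamma γ) η h - bestErrS μ XS (lossGamma γ) η H
          ≤ f (genErrS μ XS (supLoss γ Φ) η h - bestErrS μ XS (supLoss γ Φ) η H)) :
    ∀ t : ℝ, 0 ≤ t → 1/2 ≤ f t := by
  intro t ht
  classical
  obtain ⟨x₀, hx₀XS, f₀, hf₀H, g₀, hg₀H, hf₀pos, hg₀neg⟩ := hregular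
  have hx₀K : ‖x₀ - x₀‖ ≤ γ := by simp [hγ.le]
  -- f₀ is strictly positive on the ball
  have hf₀ : ∀ x', ‖x₀ - x'‖ ≤ γ → 0 < f₀ x' := by
    intro x' hx'
    have hbb : BddBelow (f₀ '' {x'' : (PiLp p (fun _ : Fin d => ℝ)) | ‖x₀ - x''‖ ≤ γ}) := by
      by_contra hnb
      rw [uInf, Real.sInf_of_not_bddBelow hnb] at hf₀pos
      exact lt_irrefl 0 hf₀pos
    have : uInf γ f₀ x₀ ≤ f₀ x' := csInf_le hbb ⟨x', hx', rfl⟩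
    linarith
  -- g₀ is strictly negative on the ball
  have hg₀ : ∀ x', ‖x₀ - x'‖ ≤ γ → g₀ x' < 0 := by
    intro x' hx'
    have hba : BddAbove (g₀ '' {x'' : (PiLp p (fun _ : Fin d => ℝ)) | ‖x₀ - x''‖ ≤ γ}) := by
      by_contra hnb
      rw [oSup, Real.sSup_of_not_bddAbove hnb] at hg₀neg
      exact lt_irrefl 0 hg₀neg
    have : g₀ x' ≤ oSup γ g₀ x₀ := le_csSup hba ⟨x', hx', rfl⟩
    linarith
  set μ : Measure (PiLp p (fun _ : Fin d => ℝ)) := Measure.dirac x₀ with hμdef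
  have hprob : IsProbabilityMeasure μ := Measure.dirac.isProbabilityMeasure
  have hμXS : μ XS = 1 := by
    rw [hμdef, Measure.dirac_apply' _ hXSmeas, Set.indicator_of_mem hx₀XS]
    rfl
  have key : ∀ (ℓ : ((PiLp p (fun _ : Fin d => ℝ)) → ℝ) → (PiLp p (fun _ : Fin d => ℝ)) → ℝ → ℝ) (c : ℝ) (h : (PiLp p (fun _ : Fin d => ℝ)) → ℝ),
      genErrS μ XS ℓ (fun _ => c) h = c * ℓ h x₀ 1 + (1 - c) * ℓ h x₀ (-1) := by
    intro ℓ c h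
    show (∫ x in XS, condRisk ℓ (fun _ => c) h x ∂μ) = _
    rw [hμdef, MeasureTheory.restrict_dirac' hXSmeas, if_pos hx₀XS, integral_dirac]
    rfl
  -- values of the adversarial loss on the special hypotheses
  have L01 : lossGamma γ (fun _ : (PiLp p (fun _ : Fin d => ℝ)) => (0:ℝ)) x₀ 1 = 1 :=
    lossGamma_eq_one' hx₀K (by norm_num)
  have L0m : lossGamma γ (fun _ : (PiLp p (fun _ : Fin d => ℝ)) => (0:ℝ)) x₀ (-1) = 1 :=
    lossGamma_eq_one' hx₀K (by norm_num)
  have Lf₀1 : lossGamma γ f₀ x₀ 1 = 0 :=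
    lossGamma_eq_zero' (fun x' hx' => by rw [one_mul]; exact hf₀ x' hx')
  have Lf₀m : lossGamma γ f₀ x₀ (-1) = 1 :=
    lossGamma_eq_one' hx₀K (by have := hf₀ x₀ hx₀K; rw [neg_one_mul]; linarith)
  have Lg₀m : lossGamma γ g₀ x₀ (-1) = 0 :=
    lossGamma_eq_zero' (fun x' hx' => by
      have := hg₀ x' hx'; rw [neg_one_mul]; linarith)
  by_cases hA : ∀ h ∈ H, 2 * Φ 0 ≤ supLoss γ Φ h x₀ 1 + supLoss γ Φ h x₀ (-1)
  · -- Case A : the constant 1/2 conditional distribution works with h = 0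
    have hbl : bestErrS μ XS (lossGamma γ) (fun _ => (1/2 : ℝ)) H = 1/2 := by
      refine le_antisymm (csInf_le ⟨1/2, ?_⟩ ⟨f₀, hf₀H, ?_⟩) (le_csInf (hHne.image _) ?_)
      · rintro v ⟨h, hh, rfl⟩
        dsimp only
        rw [key]
        have := lossGamma_sum_ge_one' h x₀ hγ.le
        linarith
      · dsimp only
        rw [key, Lf₀1, Lf₀m]; ring
      · rintro v ⟨h, hh, rfl⟩
        dsimp only
        rw [key]
        have := lossGamma_sum_ge_one' h x₀ hγ.le
        linarith
    have hbp : bestErrS μ XS (supLoss γ Φ) (fun _ => (1/2 : ℝ)) H = Φ 0 := by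
      refine le_antisymm (csInf_le ⟨Φ 0, ?_⟩
        ⟨(fun _ => (0:ℝ)), hzero, ?_⟩) (le_csInf (hHne.image _) ?_)
      · rintro v ⟨h, hh, rfl⟩
        dsimp only
        rw [key]
        have := hA h hh
        linarith
      · dsimp only
        rw [key, supLoss_zero_fun' Φ x₀ 1 hγ.le, supLoss_zero_fun' Φ x₀ (-1) hγ.le]; ring
      · rintro v ⟨h, hh, rfl⟩
        dsimp only
        rw [key]
        have := hA h hh
        linarith
    have hb := hbound μ hprob hμXS (fun _ => (1/2 : ℝ)) measurable_const
      (fun _ => ⟨by norm_num, by norm_num⟩) (fun _ => (0:ℝ)) hzero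
    rw [hbl, hbp, key, key, L01, L0m, supLoss_zero_fun' Φ x₀ 1 hγ.le,
      supLoss_zero_fun' Φ x₀ (-1) hγ.le] at hb
    have hb0 : (1/2 : ℝ) ≤ f 0 := by
      have he : (1/2 : ℝ) * 1 + (1 - 1/2) * 1 - 1/2 = 1/2 := by ring
      have he2 : (1/2 : ℝ) * Φ 0 + (1 - 1/2) * Φ 0 - Φ 0 = 0 := by ring
      rw [he, he2] at hb
      exact hb
    calc (1/2 : ℝ) ≤ f 0 := hb0
      _ ≤ f t := hfmono (by simp) (by exact ht) ht
  · -- Case B : some hypothesis has an unbounded supremum loss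
    push_neg at hA
    obtain ⟨h₁, hh₁, hlt⟩ := hA
    have hnb : ¬BddAbove ((fun x' => Φ (1 * h₁ x')) '' {x' : (PiLp p (fun _ : Fin d => ℝ)) | ‖x₀ - x'‖ ≤ γ}) ∨
        ¬BddAbove ((fun x' => Φ ((-1) * h₁ x')) '' {x' : (PiLp p (fun _ : Fin d => ℝ)) | ‖x₀ - x'‖ ≤ γ}) := by
      by_contra hcon
      push_neg at hcon
      obtain ⟨b1, b2⟩ := hcon
      have e1 : Φ (1 * h₁ x₀) ≤ supLoss γ Φ h₁ x₀ 1 := le_csSup b1 ⟨x₀, hx₀K, rfl⟩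
      have e2 : Φ ((-1) * h₁ x₀) ≤ supLoss γ Φ h₁ x₀ (-1) := le_csSup b2 ⟨x₀, hx₀K, rfl⟩
      rw [one_mul] at e1
      rw [neg_one_mul] at e2
      have := conv_two_mul Φ hΦconv (h₁ x₀)
      linarith
    rcases hnb with hnb | hnb
    · -- unbounded for y = 1 : use η ≡ 1
      obtain ⟨v, ⟨x', hx', rfl⟩, hv⟩ := not_bddAbove_iff.mp hnb (Φ 0)
      have hle : (1:ℝ) * h₁ x' ≤ 0 := by
        by_contra hgt
        push_neg at hgt
        have : Φ (1 * h₁ x') ≤ Φ 0 := hΦanti hgt.le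
        exact absurd this (not_le.mpr hv)
      have Lh₁ : lossGamma γ h₁ x₀ 1 = 1 := lossGamma_eq_one' hx' hle
      have Ph₁ : supLoss γ Φ h₁ x₀ 1 = 0 := Real.sSup_of_not_bddAbove hnb
      have hbl : bestErrS μ XS (lossGamma γ) (fun _ => (1:ℝ)) H = 0 := by
        refine le_antisymm (csInf_le ⟨0, ?_⟩ ⟨f₀, hf₀H, ?_⟩) (le_csInf (hHne.image _) ?_)
        · rintro v ⟨h, hh, rfl⟩
          dsimp only
          rw [key]
          have := lossGamma_nonneg' (γ := γ) h x₀ 1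
          have := lossGamma_nonneg' (γ := γ) h x₀ (-1)
          linarith
        · dsimp only
          rw [key, Lf₀1]; ring
        · rintro v ⟨h, hh, rfl⟩
          dsimp only
          rw [key]
          have := lossGamma_nonneg' (γ := γ) h x₀ 1
          have := lossGamma_nonneg' (γ := γ) h x₀ (-1)
          linarith
      have hbp : bestErrS μ XS (supLoss γ Φ) (fun _ => (1:ℝ)) H = 0 := by
        refine le_antisymm (csInf_le ⟨0, ?_⟩ ⟨h₁, hh₁, ?_⟩) (le_csInf (hHne.image _) ?_)
        · rintro v ⟨h, hh, rfl⟩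
          dsimp only
          rw [key]
          have := supLoss_nonneg' (γ := γ) Φ hΦpos h x₀ 1
          have := supLoss_nonneg' (γ := γ) Φ hΦpos h x₀ (-1)
          linarith
        · dsimp only
          rw [key, Ph₁]; ring
        · rintro v ⟨h, hh, rfl⟩
          dsimp only
          rw [key]
          have := supLoss_nonneg' (γ := γ) Φ hΦpos h x₀ 1
          have := supLoss_nonneg' (γ := γ) Φ hΦpos h x₀ (-1)
          linarith
      have hb := hbound μ hprob hμXS (fun _ => (1:ℝ)) measurable_const
        (fun _ => ⟨by norm_num, by norm_num⟩) h₁ hh₁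
      rw [hbl, hbp, key, key, Lh₁, Ph₁] at hb
      have he : (1:ℝ) * 1 + (1 - 1) * lossGamma γ h₁ x₀ (-1) - 0 = 1 := by ring
      have he2 : (1:ℝ) * 0 + (1 - 1) * supLoss γ Φ h₁ x₀ (-1) - 0 = 0 := by ring
      rw [he, he2] at hb
      calc (1/2 : ℝ) ≤ 1 := by norm_num
        _ ≤ f 0 := hb
        _ ≤ f t := hfmono (by simp) (by exact ht) ht
    · -- unbounded for y = -1 : use η ≡ 0
      obtain ⟨v, ⟨x', hx', rfl⟩, hv⟩ := not_bddAbove_iff.mp hnb (Φ 0)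
      have hle : (-1:ℝ) * h₁ x' ≤ 0 := by
        by_contra hgt
        push_neg at hgt
        have : Φ ((-1) * h₁ x') ≤ Φ 0 := hΦanti hgt.le
        exact absurd this (not_le.mpr hv)
      have Lh₁ : lossGamma γ h₁ x₀ (-1) = 1 := lossGamma_eq_one' hx' hle
      have Ph₁ : supLoss γ Φ h₁ x₀ (-1) = 0 := Real.sSup_of_not_bddAbove hnb
      have hbl : bestErrS μ XS (lossGamma γ) (fun _ => (0:ℝ)) H = 0 := by
        refine le_antisymm (csInf_le ⟨0, ?_⟩ ⟨g₀, hg₀H, ?_⟩) (le_csInf (hHne.image _) ?_)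
        · rintro v ⟨h, hh, rfl⟩
          dsimp only
          rw [key]
          have := lossGamma_nonneg' (γ := γ) h x₀ 1
          have := lossGamma_nonneg' (γ := γ) h x₀ (-1)
          linarith
        · dsimp only
          rw [key, Lg₀m]; ring
        · rintro v ⟨h, hh, rfl⟩
          dsimp only
          rw [key]
          have := lossGamma_nonneg' (γ := γ) h x₀ 1
          have := lossGamma_nonneg' (γ := γ) h x₀ (-1)
          linarith
      have hbp : bestErrS μ XS (supLoss γ Φ) (fun _ => (0:ℝ)) H = 0 := by
        refine le_antisymm (csInf_le ⟨0, ?_⟩ ⟨h₁, hh₁, ?_⟩) (le_csInf (hHne.image _) ?_)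
        · rintro v ⟨h, hh, rfl⟩
          dsimp only
          rw [key]
          have := supLoss_nonneg' (γ := γ) Φ hΦpos h x₀ 1
          have := supLoss_nonneg' (γ := γ) Φ hΦpos h x₀ (-1)
          linarith
        · dsimp only
          rw [key, Ph₁]; ring
        · rintro v ⟨h, hh, rfl⟩
          dsimp only
          rw [key]
          have := supLoss_nonneg' (γ := γ) Φ hΦpos h x₀ 1
          have := supLoss_nonneg' (γ := γ) Φ hΦpos h x₀ (-1)
          linarith
      have hb := hbound μ hprob hμXS (fun _ => (0:ℝ)) measurable_const
        (fun _ => ⟨by norm_num, by norm_num⟩) h₁ hh₁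
      rw [hbl, hbp, key, key, Lh₁, Ph₁] at hb
      have he : (0:ℝ) * lossGamma γ h₁ x₀ 1 + (1 - 0) * 1 - 0 = 1 := by ring
      have he2 : (0:ℝ) * supLoss γ Φ h₁ x₀ 1 + (1 - 0) * 0 - 0 = 0 := by ring
      rw [he, he2] at hb
      calc (1/2 : ℝ) ≤ 1 := by norm_num
        _ ≤ f 0 := hb
        _ ≤ f t := hfmono (by simp) (by exact ht) ht
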